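/- For every 0 < α < 1 and every x ≥ 0, one has E_{α,α}(−x) ≥ 0. -/

import Mathlib

/-- The real Mittag-Leffler function `E_{α,β}(x) = ∑_{k=0}^∞ x^k / Γ(αk + β)`. -/
noncomputable def mittagLefflerReal (α β : ℝ) (x : ℝ) : ℝ :=
  ∑' k : ℕ, x ^ k / Real.Gamma (α * (k : ℝ) + β)

open Real Filter Finset Polynomial Topology

noncomputable def MLc (α : ℝ) : ℕ → ℕ → ℝ
  | 0, 0 => α
  | 0, _+1 => 0
  | n+1, 0 => (α + n + 1) * MLc α n 0
  | n+1, m+1 => (α*(m+1) + α + n + 1) * MLc α n (m+1)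
      + (α*((n:ℝ)+1-m) - (n+1)) * MLc α n m

lemma MLc_eq_zero (α : ℝ) : ∀ n m, n < m → MLc α n m = 0 := by
  intro n
  induction n with
  | zero => intro m hm; match m, hm with
    | m+1, _ => rfl
  | succ n ih =>
    intro m hm
    match m, hm with
    | m+1, hm =>
      have h1 : MLc α n (m+1) = 0 := ih _ (by omega)
      have h2 : MLc α n m = 0 := ih _ (by omega)
      simp [MLc, h1, h2]

lemma MLc_sign {α : ℝ} (hα0 : 0 < α) (hα1 : α < 1) :
    ∀ n m, 0 ≤ (-1:ℝ)^m * MLc α n m := by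
  intro n
  induction n with
  | zero =>
    intro m
    match m with
    | 0 => simpa [MLc] using hα0.le
    | m+1 => simp [MLc]
  | succ n ih =>
    intro m
    match m with
    | 0 =>
      have := ih 0
      simp only [pow_zero, one_mul] at this ⊢
      show 0 ≤ (α + n + 1) * MLc α n 0
      positivity
    | m+1 =>
      rcases le_or_gt m n with hmn | hmn
      · show 0 ≤ (-1:ℝ)^(m+1) * ((α*(m+1) + α + n + 1) * MLc α n (m+1)
          + (α*((n:ℝ)+1-m) - (n+1)) * MLc α n m)
        have h1 : (0:ℝ) ≤ (α*(m+1) + α + n + 1) * ((-1:ℝ)^(m+1) * MLc α n (m+1)) := by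
          have := ih (m+1); positivity
        have h2 : (0:ℝ) ≤ ((n:ℝ)+1 - α*((n:ℝ)+1-m)) * ((-1:ℝ)^m * MLc α n m) := by
          have hq : α*((n:ℝ)+1-m) ≤ (n:ℝ)+1 := by
            have hpos : (0:ℝ) ≤ (n:ℝ)+1-m := by
              have : (m:ℝ) ≤ n := by exact_mod_cast hmn
              linarith
            nlinarith
          have := ih m
          have h3 : (0:ℝ) ≤ (n:ℝ)+1 - α*((n:ℝ)+1-m) := by linarith
          positivity
        calc (0:ℝ) ≤ (α*(m+1) + α + n + 1) * ((-1:ℝ)^(m+1) * MLc α n (m+1))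
              + ((n:ℝ)+1 - α*((n:ℝ)+1-m)) * ((-1:ℝ)^m * MLc α n m) := by linarith
          _ = (-1:ℝ)^(m+1) * ((α*(m+1) + α + n + 1) * MLc α n (m+1)
              + (α*((n:ℝ)+1-m) - (n+1)) * MLc α n m) := by ring
      · have h1 : MLc α n (m+1) = 0 := MLc_eq_zero α n (m+1) (by omega)
        have h2 : MLc α n m = 0 := MLc_eq_zero α n m hmn
        show 0 ≤ (-1:ℝ)^(m+1) * ((α*(m+1) + α + n + 1) * MLc α n (m+1)
          + (α*((n:ℝ)+1-m) - (n+1)) * MLc α n m)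
        simp [h1, h2]

-- eval of ascPochhammer as product
lemma asc_eval_prod (p : ℕ) (u : ℝ) :
    (ascPochhammer ℝ p).eval u = ∏ i ∈ range p, (u + i) := by
  induction p with
  | zero => simp
  | succ p ih =>
    rw [ascPochhammer_succ_right, eval_mul, ih, prod_range_succ]
    simp

lemma asc_eval_succ_left (p : ℕ) (u : ℝ) :
    (ascPochhammer ℝ (p+1)).eval u = u * (ascPochhammer ℝ p).eval (u+1) := by
  rw [ascPochhammer_succ_left, eval_mul, eval_X, eval_comp, eval_add, eval_X, eval_one]

lemma asc_eval_succ_right (p : ℕ) (u : ℝ) :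
    (ascPochhammer ℝ (p+1)).eval u = (ascPochhammer ℝ p).eval u * (u + p) := by
  rw [ascPochhammer_succ_right, eval_mul, eval_add, eval_X, eval_natCast]

lemma MLc_key (α : ℝ) : ∀ n, ∀ k : ℕ,
    ∑ m ∈ range (n+1), MLc α n m * (ascPochhammer ℝ (n+1)).eval ((k:ℝ) - m + 1)
      = ((n+1).factorial : ℝ) * ∏ j ∈ range (n+1), (α*((k:ℝ)+1) + j) := by
  intro n
  induction n with
  | zero =>
    intro k
    simp [MLc, asc_eval_prod]
  | succ n ih =>
    intro k
    have key : ∀ m : ℕ,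
        (α*(m:ℝ) + α + n + 1) * (ascPochhammer ℝ (n+2)).eval ((k:ℝ) - m + 1)
        + (α*((n:ℝ)+1-(m:ℝ)) - (n+1)) * (ascPochhammer ℝ (n+2)).eval ((k:ℝ) - m)
        = ((n:ℝ)+2) * (α*((k:ℝ)+1) + (n+1)) * (ascPochhammer ℝ (n+1)).eval ((k:ℝ) - m + 1) := by
      intro m
      set u : ℝ := (k:ℝ) - m with hu
      have e1 : (ascPochhammer ℝ (n+2)).eval (u + 1)
          = (ascPochhammer ℝ (n+1)).eval (u+1) * (u + 1 + (n+1)) := by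
        have := asc_eval_succ_right (n+1) (u+1); push_cast at this ⊢; linarith [this]
      have e2 : (ascPochhammer ℝ (n+2)).eval u
          = u * (ascPochhammer ℝ (n+1)).eval (u+1) := asc_eval_succ_left (n+1) u
      have hk : (k:ℝ) = u + m := by rw [hu]; ring
      rw [e1, e2, hk]
      ring
    set B : ℕ → ℝ := fun m => (ascPochhammer ℝ (n+2)).eval ((k:ℝ) - m + 1) with hB
    set B' : ℕ → ℝ := fun m => (ascPochhammer ℝ (n+1)).eval ((k:ℝ) - m + 1) with hB'
    have hBshift : ∀ m : ℕ, B (m+1) = (ascPochhammer ℝ (n+2)).eval ((k:ℝ) - m) := by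
      intro m; rw [hB]; push_cast; ring_nf
    calc ∑ m ∈ range (n+1+1), MLc α (n+1) m * B m
        = (∑ i ∈ range (n+1), ((α*((i:ℝ)+1) + α + n + 1) * MLc α n (i+1) * B (i+1)
            + (α*((n:ℝ)+1-(i:ℝ)) - (n+1)) * MLc α n i * B (i+1)))
          + (α + (n:ℝ) + 1) * MLc α n 0 * B 0 := by
          rw [Finset.sum_range_succ']
          congr 1
          · refine Finset.sum_congr rfl fun i _ => ?_
            show MLc α (n+1) (i+1) * B (i+1) = _
            have : MLc α (n+1) (i+1) = (α*((i:ℝ)+1) + α + n + 1) * MLc α n (i+1)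
                + (α*((n:ℝ)+1-(i:ℝ)) - (n+1)) * MLc α n i := by
              simp only [MLc]; try push_cast; try ring
            rw [this]; ring
      _ = (∑ i ∈ range (n+1), (α*((i:ℝ)+1) + α + n + 1) * MLc α n (i+1) * B (i+1)
            + (α*((0:ℕ):ℝ) + α + n + 1) * MLc α n 0 * B 0)
          + ∑ i ∈ range (n+1), (α*((n:ℝ)+1-(i:ℝ)) - (n+1)) * MLc α n i * B (i+1) := by
          rw [Finset.sum_add_distrib]; push_cast; ring
      _ = (∑ m ∈ range (n+2), (α*(m:ℝ) + α + n + 1) * MLc α n m * B m)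
          + ∑ i ∈ range (n+1), (α*((n:ℝ)+1-(i:ℝ)) - (n+1)) * MLc α n i * B (i+1) := by
          congr 1
          rw [Finset.sum_range_succ' (fun m => (α*(m:ℝ) + α + n + 1) * MLc α n m * B m) (n+1)]
          push_cast; ring
      _ = (∑ m ∈ range (n+1), (α*(m:ℝ) + α + n + 1) * MLc α n m * B m)
          + ∑ i ∈ range (n+1), (α*((n:ℝ)+1-(i:ℝ)) - (n+1)) * MLc α n i * B (i+1) := by
          rw [Finset.sum_range_succ (fun m => (α*(m:ℝ) + α + n + 1) * MLc α n m * B m) (n+1)]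
          rw [MLc_eq_zero α n (n+1) (by omega)]
          ring
      _ = ∑ m ∈ range (n+1), MLc α n m *
            (((n:ℝ)+2) * (α*((k:ℝ)+1) + (n+1)) * B' m) := by
          rw [← Finset.sum_add_distrib]
          refine Finset.sum_congr rfl fun m _ => ?_
          have := key m
          rw [hBshift m] at *
          calc (α*(m:ℝ) + α + n + 1) * MLc α n m * B m
              + (α*((n:ℝ)+1-(m:ℝ)) - (n+1)) * MLc α n m * ((ascPochhammer ℝ (n+2)).eval ((k:ℝ) - m))
              = MLc α n m * ((α*(m:ℝ) + α + n + 1) * B m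
                + (α*((n:ℝ)+1-(m:ℝ)) - (n+1)) * ((ascPochhammer ℝ (n+2)).eval ((k:ℝ) - m))) := by ring
            _ = MLc α n m * (((n:ℝ)+2) * (α*((k:ℝ)+1) + (n+1)) * B' m) := by rw [this]
      _ = ((n:ℝ)+2) * (α*((k:ℝ)+1) + (n+1)) *
            ∑ m ∈ range (n+1), MLc α n m * B' m := by
          rw [Finset.mul_sum]; refine Finset.sum_congr rfl fun m _ => ?_; ring
      _ = ((n:ℝ)+2) * (α*((k:ℝ)+1) + (n+1)) *
            (((n+1).factorial : ℝ) * ∏ j ∈ range (n+1), (α*((k:ℝ)+1) + j)) := by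
          rw [ih k]
      _ = ((n+1+1).factorial : ℝ) * ∏ j ∈ range (n+1+1), (α*((k:ℝ)+1) + j) := by
          rw [Finset.prod_range_succ (fun j : ℕ => α*((k:ℝ)+1) + j) (n+1), Nat.factorial_succ (n+1)]
          push_cast; ring

-- summability helper
lemma summable_succ_pow_mul_geometric {r : ℝ} (hr0 : 0 ≤ r) (hr1 : r < 1) (p : ℕ) :
    Summable (fun j : ℕ => ((j:ℝ)+1)^p * r^j) := by
  rcases eq_or_lt_of_le hr0 with h0 | h0
  · apply summable_of_ne_finset_zero (s := {0})
    intro j hj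
    have hj0 : j ≠ 0 := by simpa using hj
    rw [← h0, zero_pow hj0, mul_zero]
  · have hs : Summable (fun n : ℕ => (n:ℝ)^p * r^n) := by
      apply summable_pow_mul_geometric_of_norm_lt_one
      rw [Real.norm_eq_abs, abs_of_nonneg hr0]; exact hr1
    have hs2 : Summable (fun j : ℕ => ((j+1:ℕ):ℝ)^p * r^(j+1)) :=
      (summable_nat_add_iff 1).2 hs
    have hs3 : Summable (fun j : ℕ => r⁻¹ * (((j+1:ℕ):ℝ)^p * r^(j+1))) := hs2.mul_left _
    refine hs3.congr fun j => ?_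
    push_cast
    field_simp
    ring

lemma asc_eval_nonneg (p : ℕ) (j : ℕ) : 0 ≤ (ascPochhammer ℝ p).eval ((j:ℝ)+1) := by
  rw [asc_eval_prod]
  apply Finset.prod_nonneg
  intro i _
  positivity

lemma asc_eval_le (p : ℕ) (j : ℕ) :
    (ascPochhammer ℝ p).eval ((j:ℝ)+1) ≤ (p.factorial : ℝ) * ((j:ℝ)+1)^p := by
  rw [asc_eval_prod]
  have key : ∀ q : ℕ, (q.factorial : ℝ) * ((j:ℝ)+1)^q = ∏ i ∈ range q, (((j:ℝ)+1) * (i+1)) := by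
    intro q
    induction q with
    | zero => simp
    | succ q ih =>
      rw [Finset.prod_range_succ, ← ih, Nat.factorial_succ]
      push_cast; ring
  rw [key p]
  apply Finset.prod_le_prod
  · intro i _; positivity
  · intro i _
    have : (0:ℝ) ≤ (j:ℝ) * i := by positivity
    nlinarith

lemma summable_asc_mul_geometric (p : ℕ) {t : ℝ} (ht : |t| < 1) :
    Summable (fun j : ℕ => (ascPochhammer ℝ p).eval ((j:ℝ)+1) * t^j) := by
  apply Summable.of_norm_bounded
    (g := fun j : ℕ => (p.factorial : ℝ) * (((j:ℝ)+1)^p * |t|^j))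
  · exact (summable_succ_pow_mul_geometric (abs_nonneg t) ht p).mul_left _
  · intro j
    rw [norm_mul, Real.norm_eq_abs, Real.norm_eq_abs, abs_of_nonneg (asc_eval_nonneg p j),
      abs_pow]
    calc (ascPochhammer ℝ p).eval ((j:ℝ)+1) * |t|^j
        ≤ ((p.factorial : ℝ) * ((j:ℝ)+1)^p) * |t|^j := by
          apply mul_le_mul_of_nonneg_right (asc_eval_le p j) (by positivity)
      _ = (p.factorial : ℝ) * (((j:ℝ)+1)^p * |t|^j) := by ring

lemma asc_diff (p : ℕ) (u : ℝ) :
    (ascPochhammer ℝ (p+1)).eval (u+1) - (ascPochhammer ℝ (p+1)).eval u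
      = ((p:ℝ)+1) * (ascPochhammer ℝ p).eval (u+1) := by
  rw [asc_eval_succ_right p (u+1), asc_eval_succ_left p u]
  ring

lemma hasSum_asc (p : ℕ) {t : ℝ} (ht : |t| < 1) :
    HasSum (fun j : ℕ => (ascPochhammer ℝ p).eval ((j:ℝ)+1) * t^j)
      ((p.factorial : ℝ) / (1-t)^(p+1)) := by
  have ht1 : t < 1 := lt_of_le_of_lt (le_abs_self t) ht
  have h1t : (0:ℝ) < 1 - t := by linarith
  induction p with
  | zero =>
    simp only [ascPochhammer_zero, eval_one, one_mul, Nat.factorial_zero, Nat.cast_one]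
    rw [pow_one, one_div]
    exact hasSum_geometric_of_norm_lt_one (by rwa [Real.norm_eq_abs])
  | succ p ih =>
    have hS : Summable (fun j : ℕ => (ascPochhammer ℝ (p+1)).eval ((j:ℝ)+1) * t^j) :=
      summable_asc_mul_geometric (p+1) ht
    set U := ∑' j : ℕ, (ascPochhammer ℝ (p+1)).eval ((j:ℝ)+1) * t^j with hU
    have hUsum : HasSum (fun j : ℕ => (ascPochhammer ℝ (p+1)).eval ((j:ℝ)+1) * t^j) U :=
      hS.hasSum
    -- the shifted sum
    have hf : HasSum (fun j : ℕ => (ascPochhammer ℝ (p+1)).eval ((j:ℝ)) * t^j) (t * U) := by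
      have h1 : HasSum (fun j : ℕ => t * ((ascPochhammer ℝ (p+1)).eval ((j:ℝ)+1) * t^j))
          (t * U) := hUsum.mul_left t
      have h2 : HasSum (fun j : ℕ => (ascPochhammer ℝ (p+1)).eval (((j+1:ℕ):ℝ)) * t^(j+1))
          (t * U) := by
        refine h1.congr_fun fun j => ?_
        push_cast
        ring
      have := (hasSum_nat_add_iff (f := fun j : ℕ => (ascPochhammer ℝ (p+1)).eval ((j:ℝ)) * t^j)
        1).mp h2
      simpa [ascPochhammer_ne_zero_eval_zero] using this
    have hdiff : HasSum (fun j : ℕ =>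
        (ascPochhammer ℝ (p+1)).eval ((j:ℝ)+1) * t^j
          - (ascPochhammer ℝ (p+1)).eval ((j:ℝ)) * t^j) (U - t * U) := hUsum.sub hf
    have hdiff2 : HasSum (fun j : ℕ =>
        ((p:ℝ)+1) * ((ascPochhammer ℝ p).eval ((j:ℝ)+1) * t^j)) (U - t * U) := by
      refine hdiff.congr_fun fun j => ?_
      rw [← sub_mul, asc_diff]
      ring
    have hdiff3 : HasSum (fun j : ℕ =>
        ((p:ℝ)+1) * ((ascPochhammer ℝ p).eval ((j:ℝ)+1) * t^j))
        (((p:ℝ)+1) * ((p.factorial : ℝ) / (1-t)^(p+1))) := (ih).mul_left _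
    have hval : U - t * U = ((p:ℝ)+1) * ((p.factorial : ℝ) / (1-t)^(p+1)) :=
      hdiff2.unique hdiff3
    have hUval : U = ((p+1).factorial : ℝ) / (1-t)^(p+2) := by
      have h2 : ((1:ℝ)-t) ≠ 0 := ne_of_gt h1t
      rw [eq_div_iff (pow_ne_zero _ h2)]
      have h3 : U * (1-t)^(p+2) = (U - t*U) * (1-t)^(p+1) := by rw [pow_succ]; ring
      rw [h3, hval]
      have h4 : ((p+1).factorial : ℝ) = ((p:ℝ)+1) * p.factorial := by
        rw [Nat.factorial_succ]; push_cast; ring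
      rw [h4]
      field_simp
    rw [← hUval]
    exact hUsum

lemma hasSum_asc_shift (n : ℕ) {t : ℝ} (ht : |t| < 1) :
    ∀ m, m ≤ n → HasSum (fun k : ℕ => (ascPochhammer ℝ (n+1)).eval ((k:ℝ) - m + 1) * t^k)
      (t^m * (((n+1).factorial : ℝ) / (1-t)^(n+2))) := by
  intro m
  induction m with
  | zero =>
    intro _
    simp only [Nat.cast_zero, sub_zero, pow_zero, one_mul]
    exact hasSum_asc (n+1) ht
  | succ m ih =>
    intro hm
    have hm' : m ≤ n := by omega
    have prev := ih hm'
    have h1 : HasSum (fun k : ℕ =>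
        t * ((ascPochhammer ℝ (n+1)).eval ((k:ℝ) - m + 1) * t^k))
        (t * (t^m * (((n+1).factorial : ℝ) / (1-t)^(n+2)))) := prev.mul_left t
    have h2 : HasSum (fun k : ℕ =>
        (ascPochhammer ℝ (n+1)).eval ((((k+1:ℕ)):ℝ) - ((m+1:ℕ):ℝ) + 1) * t^(k+1))
        (t * (t^m * (((n+1).factorial : ℝ) / (1-t)^(n+2)))) := by
      refine h1.congr_fun fun k => ?_
      push_cast
      ring_nf
    have h3 := (hasSum_nat_add_iff
      (f := fun k : ℕ => (ascPochhammer ℝ (n+1)).eval (((k:ℕ):ℝ) - ((m+1:ℕ):ℝ) + 1) * t^k)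
      1).mp h2
    have hf0 : (ascPochhammer ℝ (n+1)).eval (((0:ℕ):ℝ) - ((m+1:ℕ):ℝ) + 1) * t^0 = 0 := by
      have : (((0:ℕ):ℝ) - ((m+1:ℕ):ℝ) + 1) = -(m:ℝ) := by push_cast; ring
      rw [this, asc_eval_prod]
      rw [Finset.prod_eq_zero (Finset.mem_range.mpr (show m < n+1 by omega))
        (by push_cast; ring)]
      ring
    rw [Finset.sum_range_one, hf0, add_zero] at h3
    have hval : t * (t^m * (((n+1).factorial : ℝ) / (1-t)^(n+2)))
        = t^(m+1) * (((n+1).factorial : ℝ) / (1-t)^(n+2)) := by ring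
    rw [hval] at h3
    exact h3.congr_fun fun k => by push_cast; ring_nf

lemma hasSum_prodpoly (α : ℝ) (n : ℕ) {t : ℝ} (ht : |t| < 1) :
    HasSum (fun k : ℕ => (∏ j ∈ range (n+1), (α*((k:ℝ)+1) + j)) * t^k)
      ((∑ m ∈ range (n+1), MLc α n m * t^m) / (1-t)^(n+2)) := by
  have hfact : ((n+1).factorial : ℝ) ≠ 0 := by positivity
  have hmain : HasSum (fun k : ℕ => ∑ m ∈ range (n+1),
      (MLc α n m / ((n+1).factorial : ℝ)) * ((ascPochhammer ℝ (n+1)).eval ((k:ℝ) - m + 1) * t^k))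
      (∑ m ∈ range (n+1),
      (MLc α n m / ((n+1).factorial : ℝ)) * (t^m * (((n+1).factorial : ℝ) / (1-t)^(n+2)))) := by
    apply hasSum_sum
    intro m hm
    exact (hasSum_asc_shift n ht m (by omega ∘ Finset.mem_range.mp <| hm)).mul_left _
  have hL : ∀ k : ℕ, ∑ m ∈ range (n+1),
      (MLc α n m / ((n+1).factorial : ℝ)) * ((ascPochhammer ℝ (n+1)).eval ((k:ℝ) - m + 1) * t^k)
      = (∏ j ∈ range (n+1), (α*((k:ℝ)+1) + j)) * t^k := by
    intro k
    have h1 : ∑ m ∈ range (n+1),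
        (MLc α n m / ((n+1).factorial : ℝ)) * ((ascPochhammer ℝ (n+1)).eval ((k:ℝ) - m + 1) * t^k)
        = (∑ m ∈ range (n+1), MLc α n m * (ascPochhammer ℝ (n+1)).eval ((k:ℝ) - m + 1))
          * t^k / ((n+1).factorial : ℝ) := by
      rw [Finset.sum_mul, Finset.sum_div]
      refine Finset.sum_congr rfl fun m _ => ?_
      field_simp
    rw [h1, MLc_key α n k]
    field_simp
  have hR : ∑ m ∈ range (n+1),
      (MLc α n m / ((n+1).factorial : ℝ)) * (t^m * (((n+1).factorial : ℝ) / (1-t)^(n+2)))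
      = (∑ m ∈ range (n+1), MLc α n m * t^m) / (1-t)^(n+2) := by
    rw [Finset.sum_div]
    refine Finset.sum_congr rfl fun m _ => ?_
    have h1t : ((1:ℝ)-t) ≠ 0 := by
      have : t < 1 := lt_of_le_of_lt (le_abs_self t) ht
      intro h; linarith [sub_eq_zero.mp h]
    have hD : ((1:ℝ)-t)^(n+2) ≠ 0 := pow_ne_zero _ h1t
    field_simp
  rw [hR] at hmain
  exact hmain.congr_fun (fun k => (hL k).symm)

lemma approx_nonneg {α : ℝ} (hα0 : 0 < α) (hα1 : α < 1) (n : ℕ) {y : ℝ}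
    (hy0 : 0 ≤ y) (hy1 : y < 1) :
    0 ≤ ∑' k : ℕ, (∏ j ∈ range (n+1), (α*((k:ℝ)+1) + j)) * (-y)^k := by
  have ht : |(-y)| < 1 := by rw [abs_neg, abs_of_nonneg hy0]; exact hy1
  rw [(hasSum_prodpoly α n ht).tsum_eq]
  apply div_nonneg
  · apply Finset.sum_nonneg
    intro m _
    have h1 := MLc_sign hα0 hα1 n m
    have h2 : MLc α n m * (-y)^m = ((-1:ℝ)^m * MLc α n m) * y^m := by
      rw [neg_pow]; ring
    rw [h2]
    positivity
  · have : (1:ℝ) - (-y) = 1 + y := by ring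
    rw [this]
    positivity

lemma gammaSeq_pos {s : ℝ} (hs : 0 < s) {n : ℕ} (hn : 1 ≤ n) : 0 < Real.GammaSeq s n := by
  rw [Real.GammaSeq]
  apply div_pos
  · apply mul_pos
    · apply Real.rpow_pos_of_pos
      exact_mod_cast Nat.pos_of_ne_zero (by omega)
    · exact_mod_cast Nat.factorial_pos n
  · apply Finset.prod_pos
    intro j _
    positivity

lemma Gamma_prod {s : ℝ} (hs : 0 < s) (n : ℕ) :
    Real.Gamma s * ∏ j ∈ range (n+1), (s + j) = Real.Gamma (s + n + 1) := by
  induction n with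
  | zero =>
    simp only [zero_add, Finset.prod_range_one, Nat.cast_zero, add_zero]
    rw [Real.Gamma_add_one (ne_of_gt hs)]
    ring
  | succ n ih =>
    rw [Finset.prod_range_succ, ← mul_assoc, ih]
    have h1 : s + (n:ℝ) + 1 ≠ 0 := by push_cast; positivity
    have := Real.Gamma_add_one h1
    push_cast at this ⊢
    rw [show s + (n+1:ℝ) + 1 = (s + n + 1) + 1 by ring, this]
    ring

lemma gammaSeq_succ_le {s : ℝ} (hs : 1 ≤ s) {n : ℕ} (hn : 1 ≤ n) :
    Real.GammaSeq s n ≤ Real.GammaSeq s (n+1) := by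
  have hs0 : 0 < s := lt_of_lt_of_le one_pos hs
  have hnR : (0:ℝ) < n := by exact_mod_cast Nat.pos_of_ne_zero (by omega)
  have hP : ∀ m : ℕ, 0 < ∏ j ∈ range (m+1), (s + j) := by
    intro m; apply Finset.prod_pos; intro j _; positivity
  rw [Real.GammaSeq, Real.GammaSeq, div_le_div_iff₀ (hP n) (hP (n+1))]
  rw [Finset.prod_range_succ (fun j : ℕ => s + j) (n+1)]
  have key : (n:ℝ)^s * (s + (n+1)) ≤ ((n:ℝ)+1)^s * (n+1) := by
    have hb : 1 + s * (1/(n:ℝ)) ≤ (1 + 1/(n:ℝ))^s := by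
      apply one_add_mul_self_le_rpow_one_add _ hs
      have : (0:ℝ) ≤ 1/(n:ℝ) := by positivity
      linarith
    have hmul : ((n:ℝ)+1)^s = (n:ℝ)^s * (1 + 1/(n:ℝ))^s := by
      rw [← Real.mul_rpow (le_of_lt hnR) (by positivity)]
      congr 1
      field_simp
    rw [hmul]
    have h1 : (n:ℝ)^s * ((1 + s * (1/(n:ℝ))) * ((n:ℝ)+1)) ≤ (n:ℝ)^s * ((1 + 1/(n:ℝ))^s * ((n:ℝ)+1)) := by
      apply mul_le_mul_of_nonneg_left _ (le_of_lt (Real.rpow_pos_of_pos hnR s))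
      apply mul_le_mul_of_nonneg_right hb (by positivity)
    have h2 : s + ((n:ℝ)+1) ≤ (1 + s * (1/(n:ℝ))) * ((n:ℝ)+1) := by
      have : s * ((n:ℝ)+1) / n = s + s/n := by field_simp
      have hs' : s ≤ s * ((n:ℝ)+1) / n := by
        rw [this]
        nlinarith [div_nonneg (le_of_lt hs0) (le_of_lt hnR)]
      calc s + ((n:ℝ)+1) ≤ s * ((n:ℝ)+1)/n + ((n:ℝ)+1) := by linarith
        _ = (1 + s * (1/(n:ℝ))) * ((n:ℝ)+1) := by field_simp; ring
    calc (n:ℝ)^s * (s + ((n:ℝ)+1)) ≤ (n:ℝ)^s * ((1 + s * (1/(n:ℝ))) * ((n:ℝ)+1)) := by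
          apply mul_le_mul_of_nonneg_left h2 (le_of_lt (Real.rpow_pos_of_pos hnR s))
      _ ≤ (n:ℝ)^s * ((1 + 1/(n:ℝ))^s * ((n:ℝ)+1)) := h1
      _ = (n:ℝ)^s * (1 + 1/(n:ℝ))^s * ((n:ℝ)+1) := by ring
  calc (n:ℝ)^s * (n.factorial : ℝ) * ((∏ j ∈ range (n+1), (s + j)) * (s + ((n+1:ℕ):ℝ)))
      = ((n:ℝ)^s * (s + ((n:ℝ)+1))) * ((n.factorial : ℝ) * ∏ j ∈ range (n+1), (s + j)) := by
        push_cast; ring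
    _ ≤ (((n:ℝ)+1)^s * ((n:ℝ)+1)) * ((n.factorial : ℝ) * ∏ j ∈ range (n+1), (s + j)) := by
        apply mul_le_mul_of_nonneg_right _ _
        · push_cast at key ⊢; exact key
        · have := (hP n); positivity
    _ = ((n+1:ℕ):ℝ)^s * ((n+1).factorial : ℝ) * ∏ j ∈ range (n+1), (s + j) := by
        rw [Nat.factorial_succ]; push_cast; ring

lemma gammaSeq_le_gammaSeq {s : ℝ} (hs : 1 ≤ s) {n m : ℕ} (hn : 1 ≤ n) (hnm : n ≤ m) :
    Real.GammaSeq s n ≤ Real.GammaSeq s m := by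
  induction m, hnm using Nat.le_induction with
  | base => exact le_rfl
  | succ m hm ih => exact le_trans ih (gammaSeq_succ_le hs (by omega))

lemma gammaSeq_le_Gamma {s : ℝ} (hs : 1 ≤ s) {n : ℕ} (hn : 1 ≤ n) :
    Real.GammaSeq s n ≤ Real.Gamma s := by
  apply ge_of_tendsto (Real.GammaSeq_tendsto_Gamma s)
  filter_upwards [eventually_ge_atTop n] with m hm
  exact gammaSeq_le_gammaSeq hs hn hm

lemma half_Gamma_le_gammaSeq {s : ℝ} (hs0 : 0 < s) (hs1 : s < 1) {n : ℕ} (hn : 1 ≤ n) :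
    Real.Gamma s / 2 ≤ Real.GammaSeq s n := by
  have hnR : (0:ℝ) < n := by exact_mod_cast Nat.pos_of_ne_zero (by omega)
  have hG : 0 < Real.Gamma s := Real.Gamma_pos_of_pos hs0
  have hP : 0 < ∏ j ∈ range (n+1), (s + j) := by
    apply Finset.prod_pos; intro j _; positivity
  -- Γ(s+n+1) ≤ n! * (n+1)^s via log-convexity
  have interp : Real.Gamma (s + n + 1) ≤ (n.factorial : ℝ) * ((n:ℝ)+1)^s := by
    have h := Real.Gamma_mul_add_mul_le_rpow_Gamma_mul_rpow_Gamma
      (s := (n:ℝ)+1) (t := (n:ℝ)+2) (a := 1-s) (b := s)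
      (by linarith) (by linarith) (by linarith) hs0 (by ring)
    have harg : (1-s) * ((n:ℝ)+1) + s * ((n:ℝ)+2) = s + n + 1 := by ring
    rw [harg] at h
    have hg1 : Real.Gamma ((n:ℝ)+1) = (n.factorial : ℝ) := by
      exact_mod_cast Real.Gamma_nat_eq_factorial n
    have hg2 : Real.Gamma ((n:ℝ)+2) = ((n:ℝ)+1) * (n.factorial : ℝ) := by
      rw [show ((n:ℝ)+2) = ((n:ℝ)+1) + 1 by ring, Real.Gamma_add_one (by positivity), hg1]
    rw [hg1, hg2] at h
    calc Real.Gamma (s + n + 1)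
        ≤ (n.factorial : ℝ)^(1-s) * (((n:ℝ)+1) * (n.factorial : ℝ))^s := h
      _ = ((n.factorial : ℝ)^(1-s) * (n.factorial : ℝ)^s) * ((n:ℝ)+1)^s := by
          rw [Real.mul_rpow (by positivity) (by positivity)]; ring
      _ = (n.factorial : ℝ) * ((n:ℝ)+1)^s := by
          rw [← Real.rpow_add (by exact_mod_cast Nat.factorial_pos n), sub_add_cancel,
            Real.rpow_one]
  -- GammaSeq s n = n^s n! Γ(s) / Γ(s+n+1)
  have hform : Real.GammaSeq s n = (n:ℝ)^s * (n.factorial : ℝ) * Real.Gamma s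
      / Real.Gamma (s + n + 1) := by
    rw [Real.GammaSeq, ← Gamma_prod hs0 n]
    field_simp
  have hGn1 : 0 < Real.Gamma (s + n + 1) := Real.Gamma_pos_of_pos (by positivity)
  have hA : (0:ℝ) ≤ (n:ℝ)^s * (n.factorial : ℝ) * Real.Gamma s := by positivity
  have step1 : (n:ℝ)^s * (n.factorial : ℝ) * Real.Gamma s / ((n.factorial : ℝ) * ((n:ℝ)+1)^s)
      ≤ Real.GammaSeq s n := by
    rw [hform]
    exact div_le_div_of_nonneg_left hA hGn1 interp
  have step2 : (n:ℝ)^s * (n.factorial : ℝ) * Real.Gamma s / ((n.factorial : ℝ) * ((n:ℝ)+1)^s)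
      = Real.Gamma s * ((n:ℝ)/((n:ℝ)+1))^s := by
    rw [Real.div_rpow (le_of_lt hnR) (by positivity)]
    have h1 : ((n:ℝ)+1)^s ≠ 0 := by positivity
    have h2 : (n.factorial : ℝ) ≠ 0 := by exact_mod_cast Nat.factorial_ne_zero n
    field_simp
  have step3 : Real.Gamma s / 2 ≤ Real.Gamma s * ((n:ℝ)/((n:ℝ)+1))^s := by
    have hb0 : (0:ℝ) < (n:ℝ)/((n:ℝ)+1) := by positivity
    have hb1 : (n:ℝ)/((n:ℝ)+1) ≤ 1 := by
      rw [div_le_one (by positivity)]; linarith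
    have h4 : ((n:ℝ)/((n:ℝ)+1))^(1:ℝ) ≤ ((n:ℝ)/((n:ℝ)+1))^s :=
      Real.rpow_le_rpow_of_exponent_ge hb0 hb1 (le_of_lt hs1)
    rw [Real.rpow_one] at h4
    have h5 : (1:ℝ)/2 ≤ (n:ℝ)/((n:ℝ)+1) := by
      rw [div_le_div_iff₀ (by norm_num) (by positivity)]
      have hn1 : (1:ℝ) ≤ (n:ℝ) := by exact_mod_cast hn
      linarith
    calc Real.Gamma s / 2 = Real.Gamma s * (1/2) := by ring
      _ ≤ Real.Gamma s * ((n:ℝ)/((n:ℝ)+1)) := by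
          apply mul_le_mul_of_nonneg_left h5 (le_of_lt hG)
      _ ≤ Real.Gamma s * ((n:ℝ)/((n:ℝ)+1))^s := by
          apply mul_le_mul_of_nonneg_left h4 (le_of_lt hG)
  calc Real.Gamma s / 2 ≤ Real.Gamma s * ((n:ℝ)/((n:ℝ)+1))^s := step3
    _ = (n:ℝ)^s * (n.factorial : ℝ) * Real.Gamma s / ((n.factorial : ℝ) * ((n:ℝ)+1)^s) := step2.symm
    _ ≤ Real.GammaSeq s n := step1

section Main
variable {α x : ℝ}

lemma prod_factor_le (hα1 : α < 1) (p : ℕ) (k : ℕ) (hα0 : 0 < α) :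
    ∏ j ∈ range p, (α*((k:ℝ)+1) + j) ≤ (p.factorial : ℝ) * ((k:ℝ)+1)^p := by
  calc ∏ j ∈ range p, (α*((k:ℝ)+1) + j)
      ≤ ∏ j ∈ range p, (((k:ℝ)+1) + j) := by
        apply Finset.prod_le_prod
        · intro j _; positivity
        · intro j _
          have : α*((k:ℝ)+1) ≤ (k:ℝ)+1 := by nlinarith [Nat.cast_nonneg (α := ℝ) k]
          linarith
    _ = (ascPochhammer ℝ p).eval ((k:ℝ)+1) := (asc_eval_prod p _).symm
    _ ≤ (p.factorial : ℝ) * ((k:ℝ)+1)^p := asc_eval_le p k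

lemma gammaSeq_term (hα0 : 0 < α) (n : ℕ) (hn : 1 ≤ n) (k : ℕ) (c : ℝ) :
    c^k / Real.GammaSeq (α*((k:ℝ)+1)) n
      = (1/(((n:ℝ)^α) * (n.factorial : ℝ)))
        * ((∏ j ∈ range (n+1), (α*((k:ℝ)+1) + j)) * (c/(n:ℝ)^α)^k) := by
  have hnR : (0:ℝ) < n := by exact_mod_cast Nat.pos_of_ne_zero (by omega)
  have hA : (0:ℝ) < (n:ℝ)^α := Real.rpow_pos_of_pos hnR α
  have hrw : (n:ℝ)^(α*((k:ℝ)+1)) = ((n:ℝ)^α)^(k+1) := by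
    rw [Real.rpow_mul (le_of_lt hnR), show ((k:ℝ)+1) = ((k+1:ℕ):ℝ) by push_cast; ring,
      Real.rpow_natCast]
  have hP : (0:ℝ) < ∏ j ∈ range (n+1), (α*((k:ℝ)+1) + j) := by
    apply Finset.prod_pos; intro j _; positivity
  have hF : (0:ℝ) < (n.factorial : ℝ) := by exact_mod_cast Nat.factorial_pos n
  rw [Real.GammaSeq, hrw]
  rw [show (c/(n:ℝ)^α)^k = c^k / ((n:ℝ)^α)^k by rw [div_pow]]
  rw [pow_succ]
  field_simp

lemma summable_inv_gammaSeq (hα0 : 0 < α) (hα1 : α < 1) (hx : 0 ≤ x)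
    {n₀ : ℕ} (hn₀ : 1 ≤ n₀) (hlt : x < (n₀:ℝ)^α) :
    Summable (fun k : ℕ => x^k / Real.GammaSeq (α*((k:ℝ)+1)) n₀) := by
  have hnR : (0:ℝ) < n₀ := by exact_mod_cast Nat.pos_of_ne_zero (by omega)
  have hA : (0:ℝ) < (n₀:ℝ)^α := Real.rpow_pos_of_pos hnR α
  have hF : (0:ℝ) < (n₀.factorial : ℝ) := by exact_mod_cast Nat.factorial_pos n₀
  set r : ℝ := x / (n₀:ℝ)^α with hr
  have hr0 : 0 ≤ r := by positivity
  have hr1 : r < 1 := by rw [hr, div_lt_one hA]; exact hlt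
  set C : ℝ := ((n₀+1).factorial : ℝ) / ((n₀:ℝ)^α * (n₀.factorial : ℝ)) with hC
  refine Summable.of_nonneg_of_le ?_ ?_
    ((summable_succ_pow_mul_geometric hr0 hr1 (n₀+1)).mul_left C)
  · intro k
    have := gammaSeq_pos (s := α*((k:ℝ)+1)) (by positivity) hn₀
    positivity
  · intro k
    rw [gammaSeq_term hα0 n₀ hn₀ k x]
    have hprod := prod_factor_le hα1 (n₀+1) k hα0
    have hrk : (0:ℝ) ≤ r^k := by positivity
    calc (1/(((n₀:ℝ)^α) * (n₀.factorial : ℝ)))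
        * ((∏ j ∈ range (n₀+1), (α*((k:ℝ)+1) + j)) * r^k)
        ≤ (1/(((n₀:ℝ)^α) * (n₀.factorial : ℝ)))
          * ((((n₀+1).factorial : ℝ) * ((k:ℝ)+1)^(n₀+1)) * r^k) := by
          apply mul_le_mul_of_nonneg_left _ (by positivity)
          exact mul_le_mul_of_nonneg_right hprod hrk
      _ = C * (((k:ℝ)+1)^(n₀+1) * r^k) := by rw [hC]; field_simp

/-- For `0 < α < 1` and `x ≥ 0`, one has `E_{α,α}(−x) ≥ 0`. -/
theorem mittagLeffler_alpha_alpha_nonneg (α : ℝ) (hα0 : 0 < α) (hα1 : α < 1)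
    (x : ℝ) (hx : 0 ≤ x) :
    0 ≤ mittagLefflerReal α α (-x) := by
  -- rewrite the target as a tsum over k of (-x)^k / Γ(α(k+1))
  have hEeq : mittagLefflerReal α α (-x) = ∑' k : ℕ, (-x)^k / Real.Gamma (α*((k:ℝ)+1)) := by
    unfold mittagLefflerReal
    exact tsum_congr fun k => by rw [show α*(k:ℝ)+α = α*((k:ℝ)+1) by ring]
  rw [hEeq]
  -- choose n₀ with x < n₀^α
  have hten : Tendsto (fun n : ℕ => ((n:ℝ))^α) atTop atTop :=
    (tendsto_rpow_atTop hα0).comp tendsto_natCast_atTop_atTop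
  obtain ⟨n₀, hn₀⟩ := ((hten.eventually_gt_atTop x).and (eventually_ge_atTop 1)).exists
  obtain ⟨hn₀x, hn₀1⟩ := hn₀
  -- dominated convergence
  set f : ℕ → ℕ → ℝ := fun n k => (-x)^k / Real.GammaSeq (α*((k:ℝ)+1)) n with hf
  set g : ℕ → ℝ := fun k => (-x)^k / Real.Gamma (α*((k:ℝ)+1)) with hg
  set K : ℕ := ⌈1/α⌉₊ with hK
  set bound : ℕ → ℝ := fun k => x^k / Real.GammaSeq (α*((k:ℝ)+1)) n₀
    + (if α*((k:ℝ)+1) < 1 then 2*x^k / Real.Gamma (α*((k:ℝ)+1)) else 0) with hbound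
  have hzpos : ∀ k : ℕ, (0:ℝ) < α*((k:ℝ)+1) := fun k => by positivity
  have h_sum : Summable bound := by
    apply Summable.add
    · exact summable_inv_gammaSeq hα0 hα1 hx hn₀1 hn₀x
    · apply summable_of_ne_finset_zero (s := Finset.range K)
      intro k hk
      have hkK : K ≤ k := le_of_not_gt (fun h => hk (Finset.mem_range.mpr h))
      have h1a : 1/α ≤ (K:ℝ) := Nat.le_ceil _
      have : ¬ (α*((k:ℝ)+1) < 1) := by
        push_neg
        have hkR : (K:ℝ) ≤ (k:ℝ) := by exact_mod_cast hkK
        have : 1/α ≤ (k:ℝ) := le_trans h1a hkR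
        rw [div_le_iff₀ hα0] at this
        nlinarith
      simp [this]
  have h_tendsto : ∀ k : ℕ, Tendsto (f · k) atTop (𝓝 (g k)) := by
    intro k
    apply Filter.Tendsto.div tendsto_const_nhds (Real.GammaSeq_tendsto_Gamma _)
    exact (Real.Gamma_pos_of_pos (hzpos k)).ne'
  have h_bound : ∀ᶠ n in atTop, ∀ k, ‖f n k‖ ≤ bound k := by
    filter_upwards [eventually_ge_atTop n₀] with n hn
    intro k
    have hn1 : 1 ≤ n := le_trans hn₀1 hn
    have hGSn : 0 < Real.GammaSeq (α*((k:ℝ)+1)) n := gammaSeq_pos (hzpos k) hn1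
    have hGSn₀ : 0 < Real.GammaSeq (α*((k:ℝ)+1)) n₀ := gammaSeq_pos (hzpos k) hn₀1
    have hnorm : ‖f n k‖ = x^k / Real.GammaSeq (α*((k:ℝ)+1)) n := by
      rw [hf]
      rw [Real.norm_eq_abs, abs_div, abs_pow, abs_neg, abs_of_nonneg hx,
        abs_of_pos hGSn]
    rw [hnorm]
    simp only [hbound]
    rcases lt_or_ge (α*((k:ℝ)+1)) 1 with hz1 | hz1
    · -- small z: use half-Gamma bound
      have hge := half_Gamma_le_gammaSeq (hzpos k) hz1 hn1
      have hGpos : 0 < Real.Gamma (α*((k:ℝ)+1)) := Real.Gamma_pos_of_pos (hzpos k)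
      have h2 : x^k / Real.GammaSeq (α*((k:ℝ)+1)) n ≤ 2*x^k / Real.Gamma (α*((k:ℝ)+1)) := by
        rw [div_le_div_iff₀ hGSn hGpos]
        calc x^k * Real.Gamma (α*((k:ℝ)+1))
            = 2 * x^k * (Real.Gamma (α*((k:ℝ)+1)) / 2) := by ring
          _ ≤ 2 * x^k * Real.GammaSeq (α*((k:ℝ)+1)) n := by
              apply mul_le_mul_of_nonneg_left hge (by positivity)
          _ = 2*x^k * Real.GammaSeq (α*((k:ℝ)+1)) n := by ring
      rw [if_pos hz1]
      have : (0:ℝ) ≤ x^k / Real.GammaSeq (α*((k:ℝ)+1)) n₀ := by positivity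
      linarith
    · -- big z: monotonicity
      have hmono := gammaSeq_le_gammaSeq hz1 hn₀1 hn
      have h2 : x^k / Real.GammaSeq (α*((k:ℝ)+1)) n ≤ x^k / Real.GammaSeq (α*((k:ℝ)+1)) n₀ :=
        div_le_div_of_nonneg_left (by positivity) hGSn₀ hmono
      rw [if_neg (not_lt.mpr hz1)]
      linarith
  have htend : Tendsto (fun n => ∑' k, f n k) atTop (𝓝 (∑' k, g k)) :=
    tendsto_tsum_of_dominated_convergence h_sum h_tendsto h_bound
  -- eventual nonnegativity of the approximants
  have h_nonneg : ∀ᶠ n : ℕ in atTop, 0 ≤ ∑' k, f n k := by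
    filter_upwards [hten.eventually_gt_atTop x, eventually_ge_atTop 1] with n hnx hn1
    have hnR : (0:ℝ) < n := by exact_mod_cast Nat.pos_of_ne_zero (by omega)
    have hA : (0:ℝ) < (n:ℝ)^α := Real.rpow_pos_of_pos hnR α
    have hF : (0:ℝ) < (n.factorial : ℝ) := by exact_mod_cast Nat.factorial_pos n
    set y : ℝ := x / (n:ℝ)^α with hy
    have hy0 : 0 ≤ y := by positivity
    have hy1 : y < 1 := by rw [hy, div_lt_one hA]; exact hnx
    have heq : ∑' k, f n k = (1/(((n:ℝ)^α) * (n.factorial : ℝ)))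
        * ∑' k : ℕ, (∏ j ∈ range (n+1), (α*((k:ℝ)+1) + j)) * (-y)^k := by
      rw [← tsum_mul_left]
      apply tsum_congr
      intro k
      simp only [hf]
      rw [gammaSeq_term (α := α) hα0 n hn1 k (-x), hy, neg_div]
    rw [heq]
    apply mul_nonneg (by positivity)
    exact approx_nonneg hα0 hα1 n hy0 hy1
  exact ge_of_tendsto htend h_nonneg

end Main
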